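/- Let f, g ∈ A be nonzero, and consider the master-formula λ-bracket of the scalar two-dimensional first-order operator, i.e. with generator coefficients P_{(1,0)} = f, P_{(0,1)} = g, P_{(−1,0)} = −S₁^{−1}(f), P_{(0,−1)} = −S₂^{−1}(g), and P_T = 0 for all other T ∈ ℤ². If this λ-bracket satisfies the PVA-Jacobi identity for the triple (u, u, u), then ∂f/∂u_{mn} = 0 for every (m,n) ∉ {(0,0), (1,0)} and ∂g/∂u_{mn} = 0 for every (m,n) ∉ {(0,0), (0,1)}; that is, f depends only on u and u_{10}, and g depends only on u and u_{01}. -/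
import Mathlib


open MvPolynomial

namespace MPVA

/-- The algebra of difference polynomials in `ℓ` generators on a `D`-dimensional lattice:
polynomials over `ℂ` in the variables `u^i_N`, `i ∈ Fin ℓ`, `N ∈ ℤ^D`. -/
abbrev A (ℓ D : ℕ) := MvPolynomial (Fin ℓ × (Fin D → ℤ)) ℂ

variable {ℓ D : ℕ}

/-- The shift automorphism `S^M` sending `u^i_N` to `u^i_{N+M}`. -/
noncomputable def Sh (M : Fin D → ℤ) : A ℓ D ≃ₐ[ℂ] A ℓ D :=
  renameEquiv ℂ ((Equiv.refl (Fin ℓ)).prodCongr (Equiv.addRight M))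

/-- The `α`-th standard basis vector `E_α ∈ ℤ^D`. -/
def E (α : Fin D) : Fin D → ℤ := fun β => if β = α then 1 else 0

/-- Coefficient `B_T(f,g)` of `λ^T` in the master-formula λ-bracket `{f_λ g}` determined
by the generator coefficients `{u^i_λ u^j} = Σ_T (P j i T)·λ^T`:
`{f_λ g} = Σ_{i,j,M,N,T'} (∂g/∂u^j_N)·S^N(P^{ji}_{T'})·S^{N+T'−M}(∂f/∂u^i_M)·λ^{N+T'−M}`. -/
noncomputable def B (P : Fin ℓ → Fin ℓ → (Fin D → ℤ) → A ℓ D)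
    (T : Fin D → ℤ) (f g : A ℓ D) : A ℓ D :=
  ∑ᶠ (i : Fin ℓ) (j : Fin ℓ) (M : Fin D → ℤ) (N : Fin D → ℤ),
    (pderiv (j, N) g) * (Sh N (P j i (T - N + M))) * (Sh T (pderiv (i, M) f))

/-- The family of generator coefficients has only finitely many nonzero members. -/
def FinSupp (P : Fin ℓ → Fin ℓ → (Fin D → ℤ) → A ℓ D) : Prop :=
  {x : (Fin ℓ × Fin ℓ) × (Fin D → ℤ) | P x.1.1 x.1.2 x.2 ≠ 0}.Finite

/-- The PVA-Jacobi identity for the triple `(f,g,h)`, written coefficient-wise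
(for all `T, U ∈ ℤ^D`, the coefficient of `λ^T μ^U` in
`Σ_U {f_λ B_U(g,h)}μ^U − Σ_T {g_μ B_T(f,h)}λ^T = Σ_{T,U} B_U(B_T(f,g),h)λ^{T+U}μ^U`). -/
def Jacobi (P : Fin ℓ → Fin ℓ → (Fin D → ℤ) → A ℓ D) (f g h : A ℓ D) : Prop :=
  ∀ T U : Fin D → ℤ,
    B P T f (B P U g h) - B P U g (B P T f h) = B P U (B P (T - U) f g) h

/-- For `D = 2`: the lattice point `(m,n) ∈ ℤ²`. -/
def v (m n : ℤ) : Fin 2 → ℤ := ![m, n]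

/-- For `D = 2`, `ℓ = 1`: the variable `u_{mn}` of the scalar two-dimensional algebra. -/
noncomputable def uu (m n : ℤ) : A 1 2 := X ((0 : Fin 1), v m n)

/-- Generator coefficients of the scalar two-dimensional first-order operator
`P = f·S₁ + g·S₂ − S₂^{−1}∘g − S₁^{−1}∘f`. -/
noncomputable def P1 (f g : A 1 2) : Fin 1 → Fin 1 → (Fin 2 → ℤ) → A 1 2 :=
  fun _ _ T =>
    if T = v 1 0 then f
    else if T = v 0 1 then g
    else if T = v (-1) 0 then -(Sh (v (-1) 0) f)
    else if T = v 0 (-1) then -(Sh (v 0 (-1)) g)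
    else 0

section Aux

lemma v_eq_iff {m n m' n' : ℤ} : v m n = v m' n' ↔ m = m' ∧ n = n' := by
  constructor
  · intro h; exact ⟨congrFun h 0, congrFun h 1⟩
  · rintro ⟨rfl, rfl⟩; rfl

lemma v00 : v 0 0 = 0 := by funext i; fin_cases i <;> rfl

lemma neg_v (m n : ℤ) : -v m n = v (-m) (-n) := by
  funext i; fin_cases i <;> rfl

lemma v_apply0 (m n : ℤ) : v m n 0 = m := rfl
lemma v_apply1 (m n : ℤ) : v m n 1 = n := rfl

lemma neg_v1 : v (-1) 0 = -v 1 0 := by funext i; fin_cases i <;> rfl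
lemma neg_v2 : v 0 (-1) = -v 0 1 := by funext i; fin_cases i <;> rfl

lemma ne_v_of_apply {W : Fin 2 → ℤ} {m n : ℤ} {c : Fin 2} (h : W c ≠ v m n c) :
    W ≠ v m n := fun hW => h (by rw [hW])

lemma Sh_zero (p : A ℓ D) : Sh (0 : Fin D → ℤ) p = p := by
  show (renameEquiv ℂ _) p = p
  have : ((Equiv.refl (Fin ℓ)).prodCongr (Equiv.addRight (0 : Fin D → ℤ))) =
      Equiv.refl _ := by ext x <;> simp
  rw [this, renameEquiv_refl]; rfl

lemma Sh_Sh (M N : Fin D → ℤ) (p : A ℓ D) : Sh M (Sh N p) = Sh (N + M) p := by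
  show rename _ (rename _ p) = rename _ p
  rw [rename_rename]
  have : (⇑((Equiv.refl (Fin ℓ)).prodCongr (Equiv.addRight M)) ∘
      ⇑((Equiv.refl (Fin ℓ)).prodCongr (Equiv.addRight N))) =
      ⇑((Equiv.refl (Fin ℓ)).prodCongr (Equiv.addRight (N + M))) := by
    funext x
    cases x; simp [Equiv.prodCongr, add_assoc]
  rw [this]

lemma Sh_eq_zero_iff (M : Fin D → ℤ) (p : A ℓ D) : Sh M p = 0 ↔ p = 0 := by
  constructor
  · intro h
    exact (Sh M).injective (a₁ := p) (a₂ := 0) (by simpa using h)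
  · rintro rfl; exact map_zero _

lemma B_zero_fst (P : Fin ℓ → Fin ℓ → (Fin D → ℤ) → A ℓ D) (T : Fin D → ℤ)
    (h : A ℓ D) : B P T 0 h = 0 := by simp [B]

lemma B_zero_snd (P : Fin ℓ → Fin ℓ → (Fin D → ℤ) → A ℓ D) (T : Fin D → ℤ)
    (h : A ℓ D) : B P T h 0 = 0 := by simp [B]

lemma uu00 : uu 0 0 = X ((0 : Fin 1), (0 : Fin 2 → ℤ)) := by rw [uu, v00]

lemma B_u_snd (P : Fin 1 → Fin 1 → (Fin 2 → ℤ) → A 1 2) (T : Fin 2 → ℤ)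
    (h : A 1 2) :
    B P T (uu 0 0) h =
      ∑ᶠ N : Fin 2 → ℤ, (pderiv ((0 : Fin 1), N) h) * Sh N (P 0 0 (T - N)) := by
  rw [B, finsum_unique, finsum_unique]
  rw [finsum_eq_single _ (0 : Fin 2 → ℤ)]
  · refine finsum_congr fun N => ?_
    rw [uu00, show (default : Fin 1) = 0 from rfl]
    rw [pderiv_X_self, map_one, mul_one, add_zero]
  · intro M hM
    rw [uu00, show (default : Fin 1) = 0 from rfl]
    have hne : (((0 : Fin 1), (0 : Fin 2 → ℤ))) ≠ ((0 : Fin 1), M) := by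
      intro hc; exact hM (congrArg Prod.snd hc).symm
    rw [pderiv_X_of_ne hne, map_zero]
    simp

lemma B_uu (P : Fin 1 → Fin 1 → (Fin 2 → ℤ) → A 1 2) (T : Fin 2 → ℤ) :
    B P T (uu 0 0) (uu 0 0) = P 0 0 T := by
  rw [B_u_snd, finsum_eq_single _ (0 : Fin 2 → ℤ)]
  · rw [uu00, pderiv_X_self, one_mul, sub_zero, Sh_zero]
  · intro N hN
    have hne : (((0 : Fin 1), (0 : Fin 2 → ℤ))) ≠ ((0 : Fin 1), N) := by
      intro hc; exact hN (congrArg Prod.snd hc).symm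
    rw [uu00, pderiv_X_of_ne hne, zero_mul]

end Aux

section Aux2

lemma P1_apply_e1 (f g : A 1 2) : P1 f g 0 0 (v 1 0) = f := by simp [P1]

lemma P1_apply_e2 (f g : A 1 2) : P1 f g 0 0 (v 0 1) = g := by
  norm_num [P1, v_eq_iff]

lemma P1_apply_me1 (f g : A 1 2) : P1 f g 0 0 (v (-1) 0) = -(Sh (v (-1) 0) f) := by
  norm_num [P1, v_eq_iff]

lemma P1_apply_me2 (f g : A 1 2) : P1 f g 0 0 (v 0 (-1)) = -(Sh (v 0 (-1)) g) := by
  norm_num [P1, v_eq_iff]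

lemma P1_eq_zero (f g : A 1 2) {W : Fin 2 → ℤ} (h1 : W ≠ v 1 0) (h2 : W ≠ v 0 1)
    (h3 : W ≠ v (-1) 0) (h4 : W ≠ v 0 (-1)) : P1 f g 0 0 W = 0 := by
  simp [P1, h1, h2, h3, h4]

lemma B_P1_expand (f g h : A 1 2) (T : Fin 2 → ℤ) :
    B (P1 f g) T (uu 0 0) h =
      pderiv ((0 : Fin 1), T - v 1 0) h * Sh (T - v 1 0) f
      + pderiv ((0 : Fin 1), T - v 0 1) h * Sh (T - v 0 1) g
      - pderiv ((0 : Fin 1), T + v 1 0) h * Sh T f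
      - pderiv ((0 : Fin 1), T + v 0 1) h * Sh T g := by
  classical
  rw [B_u_snd]
  set F : (Fin 2 → ℤ) → A 1 2 :=
    fun N => pderiv ((0 : Fin 1), N) h * Sh N (P1 f g 0 0 (T - N)) with hF
  have key : ∀ N : Fin 2 → ℤ, T - N ≠ v 1 0 → T - N ≠ v 0 1 → T - N ≠ v (-1) 0 →
      T - N ≠ v 0 (-1) → F N = 0 := by
    intro N h1 h2 h3 h4
    rw [hF]
    simp only []
    rw [P1_eq_zero f g h1 h2 h3 h4, map_zero, mul_zero]
  have hd : ∀ (m n : ℤ) (N : Fin 2 → ℤ), N ≠ T - v m n → T - N ≠ v m n := by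
    intro m n N hN hc
    exact hN (by rw [← hc, sub_sub_cancel])
  have hsupp : Function.support F ⊆
      ↑({T - v 1 0, T - v 0 1, T + v 1 0, T + v 0 1} : Finset (Fin 2 → ℤ)) := by
    intro N hN
    simp only [Finset.coe_insert, Finset.coe_singleton, Set.mem_insert_iff,
      Set.mem_singleton_iff]
    by_contra hc
    push_neg at hc
    obtain ⟨c1, c2, c3, c4⟩ := hc
    have e3 : T + v 1 0 = T - v (-1) 0 := by rw [neg_v1]; abel
    have e4 : T + v 0 1 = T - v 0 (-1) := by rw [neg_v2]; abel
    exact hN (key N (hd _ _ _ c1) (hd _ _ _ c2) (hd _ _ _ (e3 ▸ c3)) (hd _ _ _ (e4 ▸ c4)))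
  rw [finsum_eq_finset_sum_of_support_subset F hsupp]
  have ne12 : T - v 1 0 ≠ T - v 0 1 := by
    intro hc; have := congrFun hc 0; simp [v] at this
  have ne13 : T - v 1 0 ≠ T + v 1 0 := by
    intro hc; have := congrFun hc 0; simp [v] at this; omega
  have ne14 : T - v 1 0 ≠ T + v 0 1 := by
    intro hc; have := congrFun hc 0; simp [v] at this
  have ne23 : T - v 0 1 ≠ T + v 1 0 := by
    intro hc; have := congrFun hc 1; simp [v] at this
  have ne24 : T - v 0 1 ≠ T + v 0 1 := by
    intro hc; have := congrFun hc 1; simp [v] at this; omega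
  have ne34 : T + v 1 0 ≠ T + v 0 1 := by
    intro hc; have := congrFun hc 0; simp [v] at this
  rw [Finset.sum_insert (by simp [ne12, ne13, ne14]),
    Finset.sum_insert (by simp [ne23, ne24]),
    Finset.sum_insert (by simp [ne34]), Finset.sum_singleton]
  have v1 : F (T - v 1 0) = pderiv ((0 : Fin 1), T - v 1 0) h * Sh (T - v 1 0) f := by
    rw [hF]; simp only []; rw [sub_sub_cancel, P1_apply_e1]
  have v2 : F (T - v 0 1) = pderiv ((0 : Fin 1), T - v 0 1) h * Sh (T - v 0 1) g := by
    rw [hF]; simp only []; rw [sub_sub_cancel, P1_apply_e2]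
  have v3 : F (T + v 1 0) = -(pderiv ((0 : Fin 1), T + v 1 0) h * Sh T f) := by
    rw [hF]; simp only []
    rw [show T - (T + v 1 0) = v (-1) 0 by rw [neg_v1]; abel, P1_apply_me1, map_neg,
      Sh_Sh, show v (-1) 0 + (T + v 1 0) = T by rw [neg_v1]; abel, mul_neg]
  have v4 : F (T + v 0 1) = -(pderiv ((0 : Fin 1), T + v 0 1) h * Sh T g) := by
    rw [hF]; simp only []
    rw [show T - (T + v 0 1) = v 0 (-1) by rw [neg_v2]; abel, P1_apply_me2, map_neg,
      Sh_Sh, show v 0 (-1) + (T + v 0 1) = T by rw [neg_v2]; abel, mul_neg]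
  rw [v1, v2, v3, v4]
  ring

lemma relation (f g : A 1 2) (hJ : Jacobi (P1 f g) (uu 0 0) (uu 0 0) (uu 0 0))
    (T U : Fin 2 → ℤ) (hT : P1 f g 0 0 T = 0) (hTU : P1 f g 0 0 (T - U) = 0) :
    pderiv ((0 : Fin 1), T - v 1 0) (P1 f g 0 0 U) * Sh (T - v 1 0) f
      + pderiv ((0 : Fin 1), T - v 0 1) (P1 f g 0 0 U) * Sh (T - v 0 1) g
      - pderiv ((0 : Fin 1), T + v 1 0) (P1 f g 0 0 U) * Sh T f
      - pderiv ((0 : Fin 1), T + v 0 1) (P1 f g 0 0 U) * Sh T g = 0 := by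
  have h := hJ T U
  rw [B_uu, B_uu, B_uu, hT, hTU, B_zero_snd, B_zero_fst, sub_zero] at h
  rw [← B_P1_expand, h]

end Aux2

section Aux3

lemma supp_finite (h : A 1 2) :
    {N : Fin 2 → ℤ | pderiv ((0 : Fin 1), N) h ≠ 0}.Finite := by
  apply Set.Finite.subset ((h.vars.finite_toSet).image Prod.snd)
  intro N hN
  simp only [Set.mem_setOf_eq] at hN
  have hv : ((0 : Fin 1), N) ∈ h.vars := by
    by_contra hcon
    exact hN (pderiv_eq_zero_of_notMem_vars hcon)
  exact ⟨((0 : Fin 1), N), hv, rfl⟩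

lemma P1_eq_zero_of_coord (f g : A 1 2) (W : Fin 2 → ℤ) (c : Fin 2)
    (h : W c ≤ -2 ∨ 2 ≤ W c) : P1 f g 0 0 W = 0 := by
  have key : ∀ m n : ℤ, -1 ≤ m → m ≤ 1 → -1 ≤ n → n ≤ 1 → W ≠ v m n := by
    intro m n h1 h2 h3 h4 hc
    rw [hc] at h
    have hcv : v m n c = m ∨ v m n c = n := by
      fin_cases c
      · exact Or.inl rfl
      · exact Or.inr rfl
    omega
  exact P1_eq_zero f g (key 1 0 (by omega) (by omega) (by omega) (by omega))
    (key 0 1 (by omega) (by omega) (by omega) (by omega))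
    (key (-1) 0 (by omega) (by omega) (by omega) (by omega))
    (key 0 (-1) (by omega) (by omega) (by omega) (by omega))

lemma f_n_ub (f g : A 1 2) (hf : f ≠ 0) (hg : g ≠ 0)
    (hJ : Jacobi (P1 f g) (uu 0 0) (uu 0 0) (uu 0 0)) :
    ∀ N : Fin 2 → ℤ, pderiv ((0 : Fin 1), N) f ≠ 0 → N 1 ≤ 0 := by
  by_contra hc
  push_neg at hc
  obtain ⟨N₀, hN₀, hN₀1⟩ := hc
  obtain ⟨Nm, hNm, hmax⟩ := Set.exists_max_image
    {N : Fin 2 → ℤ | pderiv ((0 : Fin 1), N) f ≠ 0} (fun N => N 1)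
    (supp_finite f) ⟨N₀, hN₀⟩
  have h1 : 1 ≤ Nm 1 := le_trans hN₀1 (hmax N₀ hN₀)
  have hrel := relation f g hJ (Nm + v 0 1) (v 1 0)
    (P1_eq_zero_of_coord f g _ 1 (by simp [v_apply1]; omega))
    (P1_eq_zero_of_coord f g _ 1 (by simp [v_apply0, v_apply1]; omega))
  rw [P1_apply_e1] at hrel
  have z1 : pderiv ((0 : Fin 1), Nm + v 0 1 - v 1 0) f = 0 := by
    by_contra hz
    have := hmax _ hz
    simp only [Pi.add_apply, Pi.sub_apply, v_apply1] at this
    omega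
  have z3 : pderiv ((0 : Fin 1), Nm + v 0 1 + v 1 0) f = 0 := by
    by_contra hz
    have := hmax _ hz
    simp only [Pi.add_apply, v_apply1] at this
    omega
  have z4 : pderiv ((0 : Fin 1), Nm + v 0 1 + v 0 1) f = 0 := by
    by_contra hz
    have := hmax _ hz
    simp only [Pi.add_apply, v_apply1] at this
    omega
  rw [z1, z3, z4, show Nm + v 0 1 - v 0 1 = Nm by abel] at hrel
  simp only [zero_mul, add_zero, zero_add, sub_zero, zero_sub, neg_eq_zero,
    mul_eq_zero, Sh_eq_zero_iff] at hrel
  rcases hrel with h | h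
  · exact hNm h
  · exact hg h

end Aux3

section Aux4

lemma f_n_lb (f g : A 1 2) (hf : f ≠ 0) (hg : g ≠ 0)
    (hJ : Jacobi (P1 f g) (uu 0 0) (uu 0 0) (uu 0 0)) :
    ∀ N : Fin 2 → ℤ, pderiv ((0 : Fin 1), N) f ≠ 0 → 0 ≤ N 1 := by
  by_contra hc
  push_neg at hc
  obtain ⟨N₀, hN₀, hN₀1⟩ := hc
  obtain ⟨Nm, hNm, hmin⟩ := Set.exists_min_image
    {N : Fin 2 → ℤ | pderiv ((0 : Fin 1), N) f ≠ 0} (fun N => N 1)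
    (supp_finite f) ⟨N₀, hN₀⟩
  have h1 : Nm 1 ≤ -1 := by have := hmin N₀ hN₀; omega
  have hrel := relation f g hJ (Nm - v 0 1) (v 1 0)
    (P1_eq_zero_of_coord f g _ 1 (by simp [v_apply0, v_apply1]; omega))
    (P1_eq_zero_of_coord f g _ 1 (by simp [v_apply0, v_apply1]; omega))
  rw [P1_apply_e1] at hrel
  have z1 : pderiv ((0 : Fin 1), Nm - v 0 1 - v 1 0) f = 0 := by
    by_contra hz
    have := hmin _ hz
    simp only [Pi.add_apply, Pi.sub_apply, v_apply0, v_apply1] at this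
    omega
  have z2 : pderiv ((0 : Fin 1), Nm - v 0 1 - v 0 1) f = 0 := by
    by_contra hz
    have := hmin _ hz
    simp only [Pi.add_apply, Pi.sub_apply, v_apply0, v_apply1] at this
    omega
  have z3 : pderiv ((0 : Fin 1), Nm - v 0 1 + v 1 0) f = 0 := by
    by_contra hz
    have := hmin _ hz
    simp only [Pi.add_apply, Pi.sub_apply, v_apply0, v_apply1] at this
    omega
  rw [z1, z2, z3, show Nm - v 0 1 + v 0 1 = Nm by abel] at hrel
  simp only [zero_mul, add_zero, zero_add, sub_zero, zero_sub, neg_eq_zero,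
    mul_eq_zero, Sh_eq_zero_iff, neg_zero] at hrel
  rcases hrel with h | h
  · exact hNm h
  · exact hg h

lemma f_m_ub (f g : A 1 2) (hf : f ≠ 0) (hg : g ≠ 0)
    (hJ : Jacobi (P1 f g) (uu 0 0) (uu 0 0) (uu 0 0)) :
    ∀ N : Fin 2 → ℤ, pderiv ((0 : Fin 1), N) f ≠ 0 → N 0 ≤ 1 := by
  by_contra hc
  push_neg at hc
  obtain ⟨N₀, hN₀, hN₀1⟩ := hc
  obtain ⟨Nm, hNm, hmax⟩ := Set.exists_max_image
    {N : Fin 2 → ℤ | pderiv ((0 : Fin 1), N) f ≠ 0} (fun N => N 0)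
    (supp_finite f) ⟨N₀, hN₀⟩
  have h1 : 2 ≤ Nm 0 := by have := hmax N₀ hN₀; omega
  have hrel := relation f g hJ (Nm + v 1 0) (v 1 0)
    (P1_eq_zero_of_coord f g _ 0 (by simp [v_apply0, v_apply1]; omega))
    (P1_eq_zero_of_coord f g _ 0 (by simp [v_apply0, v_apply1]; omega))
  rw [P1_apply_e1] at hrel
  have z2 : pderiv ((0 : Fin 1), Nm + v 1 0 - v 0 1) f = 0 := by
    by_contra hz
    have := hmax _ hz
    simp only [Pi.add_apply, Pi.sub_apply, v_apply0, v_apply1] at this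
    omega
  have z3 : pderiv ((0 : Fin 1), Nm + v 1 0 + v 1 0) f = 0 := by
    by_contra hz
    have := hmax _ hz
    simp only [Pi.add_apply, Pi.sub_apply, v_apply0, v_apply1] at this
    omega
  have z4 : pderiv ((0 : Fin 1), Nm + v 1 0 + v 0 1) f = 0 := by
    by_contra hz
    have := hmax _ hz
    simp only [Pi.add_apply, Pi.sub_apply, v_apply0, v_apply1] at this
    omega
  rw [z2, z3, z4, show Nm + v 1 0 - v 1 0 = Nm by abel] at hrel
  simp only [zero_mul, add_zero, zero_add, sub_zero, zero_sub, neg_eq_zero,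
    mul_eq_zero, Sh_eq_zero_iff, neg_zero] at hrel
  rcases hrel with h | h
  · exact hNm h
  · exact hf h

lemma f_m_lb (f g : A 1 2) (hf : f ≠ 0) (hg : g ≠ 0)
    (hJ : Jacobi (P1 f g) (uu 0 0) (uu 0 0) (uu 0 0)) :
    ∀ N : Fin 2 → ℤ, pderiv ((0 : Fin 1), N) f ≠ 0 → 0 ≤ N 0 := by
  by_contra hc
  push_neg at hc
  obtain ⟨N₀, hN₀, hN₀1⟩ := hc
  obtain ⟨Nm, hNm, hmin⟩ := Set.exists_min_image
    {N : Fin 2 → ℤ | pderiv ((0 : Fin 1), N) f ≠ 0} (fun N => N 0)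
    (supp_finite f) ⟨N₀, hN₀⟩
  have h1 : Nm 0 ≤ -1 := by have := hmin N₀ hN₀; omega
  have hrel := relation f g hJ (Nm - v 1 0) (v 1 0)
    (P1_eq_zero_of_coord f g _ 0 (by simp [v_apply0, v_apply1]; omega))
    (P1_eq_zero_of_coord f g _ 0 (by simp [v_apply0, v_apply1]; omega))
  rw [P1_apply_e1] at hrel
  have z1 : pderiv ((0 : Fin 1), Nm - v 1 0 - v 1 0) f = 0 := by
    by_contra hz
    have := hmin _ hz
    simp only [Pi.add_apply, Pi.sub_apply, v_apply0, v_apply1] at this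
    omega
  have z2 : pderiv ((0 : Fin 1), Nm - v 1 0 - v 0 1) f = 0 := by
    by_contra hz
    have := hmin _ hz
    simp only [Pi.add_apply, Pi.sub_apply, v_apply0, v_apply1] at this
    omega
  have z4 : pderiv ((0 : Fin 1), Nm - v 1 0 + v 0 1) f = 0 := by
    by_contra hz
    have := hmin _ hz
    simp only [Pi.add_apply, Pi.sub_apply, v_apply0, v_apply1] at this
    omega
  rw [z1, z2, z4, show Nm - v 1 0 + v 1 0 = Nm by abel] at hrel
  simp only [zero_mul, add_zero, zero_add, sub_zero, zero_sub, neg_eq_zero,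
    mul_eq_zero, Sh_eq_zero_iff, neg_zero] at hrel
  rcases hrel with h | h
  · exact hNm h
  · exact hf h

lemma g_n_ub (f g : A 1 2) (hf : f ≠ 0) (hg : g ≠ 0)
    (hJ : Jacobi (P1 f g) (uu 0 0) (uu 0 0) (uu 0 0)) :
    ∀ N : Fin 2 → ℤ, pderiv ((0 : Fin 1), N) g ≠ 0 → N 1 ≤ 1 := by
  by_contra hc
  push_neg at hc
  obtain ⟨N₀, hN₀, hN₀1⟩ := hc
  obtain ⟨Nm, hNm, hmax⟩ := Set.exists_max_image
    {N : Fin 2 → ℤ | pderiv ((0 : Fin 1), N) g ≠ 0} (fun N => N 1)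
    (supp_finite g) ⟨N₀, hN₀⟩
  have h1 : 2 ≤ Nm 1 := by have := hmax N₀ hN₀; omega
  have hrel := relation f g hJ (Nm + v 0 1) (v 0 1)
    (P1_eq_zero_of_coord f g _ 1 (by simp [v_apply0, v_apply1]; omega))
    (P1_eq_zero_of_coord f g _ 1 (by simp [v_apply0, v_apply1]; omega))
  rw [P1_apply_e2] at hrel
  have z1 : pderiv ((0 : Fin 1), Nm + v 0 1 - v 1 0) g = 0 := by
    by_contra hz
    have := hmax _ hz
    simp only [Pi.add_apply, Pi.sub_apply, v_apply0, v_apply1] at this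
    omega
  have z3 : pderiv ((0 : Fin 1), Nm + v 0 1 + v 1 0) g = 0 := by
    by_contra hz
    have := hmax _ hz
    simp only [Pi.add_apply, Pi.sub_apply, v_apply0, v_apply1] at this
    omega
  have z4 : pderiv ((0 : Fin 1), Nm + v 0 1 + v 0 1) g = 0 := by
    by_contra hz
    have := hmax _ hz
    simp only [Pi.add_apply, Pi.sub_apply, v_apply0, v_apply1] at this
    omega
  rw [z1, z3, z4, show Nm + v 0 1 - v 0 1 = Nm by abel] at hrel
  simp only [zero_mul, add_zero, zero_add, sub_zero, zero_sub, neg_eq_zero,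
    mul_eq_zero, Sh_eq_zero_iff, neg_zero] at hrel
  rcases hrel with h | h
  · exact hNm h
  · exact hg h

lemma g_n_lb (f g : A 1 2) (hf : f ≠ 0) (hg : g ≠ 0)
    (hJ : Jacobi (P1 f g) (uu 0 0) (uu 0 0) (uu 0 0)) :
    ∀ N : Fin 2 → ℤ, pderiv ((0 : Fin 1), N) g ≠ 0 → 0 ≤ N 1 := by
  by_contra hc
  push_neg at hc
  obtain ⟨N₀, hN₀, hN₀1⟩ := hc
  obtain ⟨Nm, hNm, hmin⟩ := Set.exists_min_image
    {N : Fin 2 → ℤ | pderiv ((0 : Fin 1), N) g ≠ 0} (fun N => N 1)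
    (supp_finite g) ⟨N₀, hN₀⟩
  have h1 : Nm 1 ≤ -1 := by have := hmin N₀ hN₀; omega
  have hrel := relation f g hJ (Nm - v 0 1) (v 0 1)
    (P1_eq_zero_of_coord f g _ 1 (by simp [v_apply0, v_apply1]; omega))
    (P1_eq_zero_of_coord f g _ 1 (by simp [v_apply0, v_apply1]; omega))
  rw [P1_apply_e2] at hrel
  have z1 : pderiv ((0 : Fin 1), Nm - v 0 1 - v 1 0) g = 0 := by
    by_contra hz
    have := hmin _ hz
    simp only [Pi.add_apply, Pi.sub_apply, v_apply0, v_apply1] at this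
    omega
  have z2 : pderiv ((0 : Fin 1), Nm - v 0 1 - v 0 1) g = 0 := by
    by_contra hz
    have := hmin _ hz
    simp only [Pi.add_apply, Pi.sub_apply, v_apply0, v_apply1] at this
    omega
  have z3 : pderiv ((0 : Fin 1), Nm - v 0 1 + v 1 0) g = 0 := by
    by_contra hz
    have := hmin _ hz
    simp only [Pi.add_apply, Pi.sub_apply, v_apply0, v_apply1] at this
    omega
  rw [z1, z2, z3, show Nm - v 0 1 + v 0 1 = Nm by abel] at hrel
  simp only [zero_mul, add_zero, zero_add, sub_zero, zero_sub, neg_eq_zero,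
    mul_eq_zero, Sh_eq_zero_iff, neg_zero] at hrel
  rcases hrel with h | h
  · exact hNm h
  · exact hg h

lemma g_m_ub (f g : A 1 2) (hf : f ≠ 0) (hg : g ≠ 0)
    (hJ : Jacobi (P1 f g) (uu 0 0) (uu 0 0) (uu 0 0)) :
    ∀ N : Fin 2 → ℤ, pderiv ((0 : Fin 1), N) g ≠ 0 → N 0 ≤ 0 := by
  by_contra hc
  push_neg at hc
  obtain ⟨N₀, hN₀, hN₀1⟩ := hc
  obtain ⟨Nm, hNm, hmax⟩ := Set.exists_max_image
    {N : Fin 2 → ℤ | pderiv ((0 : Fin 1), N) g ≠ 0} (fun N => N 0)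
    (supp_finite g) ⟨N₀, hN₀⟩
  have h1 : 1 ≤ Nm 0 := by have := hmax N₀ hN₀; omega
  have hrel := relation f g hJ (Nm + v 1 0) (v 0 1)
    (P1_eq_zero_of_coord f g _ 0 (by simp [v_apply0, v_apply1]; omega))
    (P1_eq_zero_of_coord f g _ 0 (by simp [v_apply0, v_apply1]; omega))
  rw [P1_apply_e2] at hrel
  have z2 : pderiv ((0 : Fin 1), Nm + v 1 0 - v 0 1) g = 0 := by
    by_contra hz
    have := hmax _ hz
    simp only [Pi.add_apply, Pi.sub_apply, v_apply0, v_apply1] at this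
    omega
  have z3 : pderiv ((0 : Fin 1), Nm + v 1 0 + v 1 0) g = 0 := by
    by_contra hz
    have := hmax _ hz
    simp only [Pi.add_apply, Pi.sub_apply, v_apply0, v_apply1] at this
    omega
  have z4 : pderiv ((0 : Fin 1), Nm + v 1 0 + v 0 1) g = 0 := by
    by_contra hz
    have := hmax _ hz
    simp only [Pi.add_apply, Pi.sub_apply, v_apply0, v_apply1] at this
    omega
  rw [z2, z3, z4, show Nm + v 1 0 - v 1 0 = Nm by abel] at hrel
  simp only [zero_mul, add_zero, zero_add, sub_zero, zero_sub, neg_eq_zero,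
    mul_eq_zero, Sh_eq_zero_iff, neg_zero] at hrel
  rcases hrel with h | h
  · exact hNm h
  · exact hf h

lemma g_m_lb (f g : A 1 2) (hf : f ≠ 0) (hg : g ≠ 0)
    (hJ : Jacobi (P1 f g) (uu 0 0) (uu 0 0) (uu 0 0)) :
    ∀ N : Fin 2 → ℤ, pderiv ((0 : Fin 1), N) g ≠ 0 → 0 ≤ N 0 := by
  by_contra hc
  push_neg at hc
  obtain ⟨N₀, hN₀, hN₀1⟩ := hc
  obtain ⟨Nm, hNm, hmin⟩ := Set.exists_min_image
    {N : Fin 2 → ℤ | pderiv ((0 : Fin 1), N) g ≠ 0} (fun N => N 0)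
    (supp_finite g) ⟨N₀, hN₀⟩
  have h1 : Nm 0 ≤ -1 := by have := hmin N₀ hN₀; omega
  have hrel := relation f g hJ (Nm - v 1 0) (v 0 1)
    (P1_eq_zero_of_coord f g _ 0 (by simp [v_apply0, v_apply1]; omega))
    (P1_eq_zero_of_coord f g _ 0 (by simp [v_apply0, v_apply1]; omega))
  rw [P1_apply_e2] at hrel
  have z1 : pderiv ((0 : Fin 1), Nm - v 1 0 - v 1 0) g = 0 := by
    by_contra hz
    have := hmin _ hz
    simp only [Pi.add_apply, Pi.sub_apply, v_apply0, v_apply1] at this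
    omega
  have z2 : pderiv ((0 : Fin 1), Nm - v 1 0 - v 0 1) g = 0 := by
    by_contra hz
    have := hmin _ hz
    simp only [Pi.add_apply, Pi.sub_apply, v_apply0, v_apply1] at this
    omega
  have z4 : pderiv ((0 : Fin 1), Nm - v 1 0 + v 0 1) g = 0 := by
    by_contra hz
    have := hmin _ hz
    simp only [Pi.add_apply, Pi.sub_apply, v_apply0, v_apply1] at this
    omega
  rw [z1, z2, z4, show Nm - v 1 0 + v 1 0 = Nm by abel] at hrel
  simp only [zero_mul, add_zero, zero_add, sub_zero, zero_sub, neg_eq_zero,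
    mul_eq_zero, Sh_eq_zero_iff, neg_zero] at hrel
  rcases hrel with h | h
  · exact hNm h
  · exact hf h

end Aux4

/-- if the λ-bracket of the first-order operator satisfies the PVA-Jacobi
identity for `(u,u,u)`, then `f = f(u,u_{10})` and `g = g(u,u_{01})`. -/
theorem first_order_coefficient_dependence (f g : A 1 2) (hf : f ≠ 0) (hg : g ≠ 0)
    (hJ : Jacobi (P1 f g) (uu 0 0) (uu 0 0) (uu 0 0)) :
    (∀ m n : ℤ, ¬(m = 0 ∧ n = 0) → ¬(m = 1 ∧ n = 0) →
      pderiv ((0 : Fin 1), v m n) f = 0) ∧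
    (∀ m n : ℤ, ¬(m = 0 ∧ n = 0) → ¬(m = 0 ∧ n = 1) →
      pderiv ((0 : Fin 1), v m n) g = 0) := by
  constructor
  · intro m n hmn hmn'
    by_contra hc
    have b1 := f_n_ub f g hf hg hJ (v m n) hc
    have b2 := f_n_lb f g hf hg hJ (v m n) hc
    have b3 := f_m_ub f g hf hg hJ (v m n) hc
    have b4 := f_m_lb f g hf hg hJ (v m n) hc
    simp only [v_apply0, v_apply1] at b1 b2 b3 b4
    omega
  · intro m n hmn hmn'
    by_contra hc
    have b1 := g_n_ub f g hf hg hJ (v m n) hc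
    have b2 := g_n_lb f g hf hg hJ (v m n) hc
    have b3 := g_m_ub f g hf hg hJ (v m n) hc
    have b4 := g_m_lb f g hf hg hJ (v m n) hc
    simp only [v_apply0, v_apply1] at b1 b2 b3 b4
    omega


end MPVA
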